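/- Let M be a real square matrix with rows and columns indexed by a finite set E, let X ⊆ E be such that the principal submatrix M[X] is invertible, and let M*X denote the principal pivot transform of M at X: writing M in block form with M₁ = M[X] (the X×X block), M₂ (the X×(E\X) block), M₃, M₄, set M*X to have blocks M₁⁻¹, -M₁⁻¹M₂, M₃M₁⁻¹, M₄ - M₃M₁⁻¹M₂. Then for every Y ⊆ E, det((M*X)[Y]) = det(M[X △ Y]) / det(M[X]). -/

import Mathlib

open Matrix
open scoped symmDiff

/-- The principal submatrix of `M` on the index set `I` (with `det (psub M ∅) = 1`). -/
def psub {m : Type*} {K : Type*} (M : Matrix m m K) (I : Finset m) :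
    Matrix I I K := fun i j => M i.1 j.1

/-- Tucker's principal pivot transform `M * X` of a real matrix `M` at an index set `X`
with `M[X]` invertible: in block form, with `M₁ = M[X]`, the blocks of `M * X` are
`M₁⁻¹`, `-M₁⁻¹M₂`, `M₃M₁⁻¹` and `M₄ - M₃M₁⁻¹M₂`. -/
noncomputable def ppt {n : ℕ} (M : Matrix (Fin n) (Fin n) ℝ) (X : Finset (Fin n)) :
    Matrix (Fin n) (Fin n) ℝ :=
  let M1 : Matrix X X ℝ := fun i j => M i.1 j.1
  let M2 : Matrix X ↥(Xᶜ) ℝ := fun i j => M i.1 j.1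
  let M3 : Matrix ↥(Xᶜ) X ℝ := fun i j => M i.1 j.1
  fun i j =>
    if hi : i ∈ X then
      if hj : j ∈ X then M1⁻¹ ⟨i, hi⟩ ⟨j, hj⟩
      else (-(M1⁻¹ * M2)) ⟨i, hi⟩ ⟨j, Finset.mem_compl.mpr hj⟩
    else
      if hj : j ∈ X then (M3 * M1⁻¹) ⟨i, Finset.mem_compl.mpr hi⟩ ⟨j, hj⟩
      else M i j - (M3 * M1⁻¹ * M2) ⟨i, Finset.mem_compl.mpr hi⟩ ⟨j, Finset.mem_compl.mpr hj⟩

namespace Stmt19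
variable {n : ℕ}

def m1 (M : Matrix (Fin n) (Fin n) ℝ) (X : Finset (Fin n)) : Matrix X X ℝ :=
  fun i j => M i.1 j.1
def m2 (M : Matrix (Fin n) (Fin n) ℝ) (X : Finset (Fin n)) : Matrix X ↥(Xᶜ) ℝ :=
  fun i j => M i.1 j.1
def m3 (M : Matrix (Fin n) (Fin n) ℝ) (X : Finset (Fin n)) : Matrix ↥(Xᶜ) X ℝ :=
  fun i j => M i.1 j.1

variable {M : Matrix (Fin n) (Fin n) ℝ} {X : Finset (Fin n)} {i j : Fin n}

lemma ppt_apply_pp (hi : i ∈ X) (hj : j ∈ X) :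
    ppt M X i j = (m1 M X)⁻¹ ⟨i, hi⟩ ⟨j, hj⟩ := by
  simp only [ppt]; rw [dif_pos hi, dif_pos hj]; rfl

lemma ppt_apply_pn (hi : i ∈ X) (hj : j ∉ X) :
    ppt M X i j = -(((m1 M X)⁻¹ * m2 M X) ⟨i, hi⟩ ⟨j, Finset.mem_compl.mpr hj⟩) := by
  simp only [ppt]; rw [dif_pos hi, dif_neg hj]; rfl

lemma ppt_apply_np (hi : i ∉ X) (hj : j ∈ X) :
    ppt M X i j = (m3 M X * (m1 M X)⁻¹) ⟨i, Finset.mem_compl.mpr hi⟩ ⟨j, hj⟩ := by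
  simp only [ppt]; rw [dif_neg hi, dif_pos hj]; rfl

lemma ppt_apply_nn (hi : i ∉ X) (hj : j ∉ X) :
    ppt M X i j = M i j -
      (m3 M X * (m1 M X)⁻¹ * m2 M X) ⟨i, Finset.mem_compl.mpr hi⟩ ⟨j, Finset.mem_compl.mpr hj⟩ := by
  simp only [ppt]; rw [dif_neg hi, dif_neg hj]; rfl

def rmix (M : Matrix (Fin n) (Fin n) ℝ) (S : Finset (Fin n)) : Matrix (Fin n) (Fin n) ℝ :=
  Matrix.of fun i j => if i ∈ S then M i j else if i = j then 1 else 0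

lemma det_rmix (M : Matrix (Fin n) (Fin n) ℝ) (S : Finset (Fin n)) :
    (rmix M S).det = (psub M S).det := by
  classical
  let e : {x // x ∈ S} ⊕ {x // ¬ x ∈ S} ≃ Fin n := Equiv.sumCompl (· ∈ S)
  rw [← Matrix.det_submatrix_equiv_self e]
  have h : (rmix M S).submatrix e e =
      Matrix.fromBlocks (psub M S) (Matrix.of fun (i : {x // x ∈ S}) (j : {x // ¬ x ∈ S}) => M i.1 j.1) 0 1 := by
    ext i j
    cases i with
    | inl a =>
      cases j with
      | inl b => simp [e, rmix, psub]
      | inr b => simp [e, rmix]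
    | inr a =>
      cases j with
      | inl b =>
        have : a.1 ≠ b.1 := fun h => a.2 (h ▸ b.2)
        simp [e, rmix, a.2, this]
      | inr b =>
        simp [e, rmix, a.2, Matrix.one_apply, Subtype.ext_iff]
  rw [h, Matrix.det_fromBlocks_zero₂₁]
  simp


lemma ppt_mul (M : Matrix (Fin n) (Fin n) ℝ) (X : Finset (Fin n))
    (hX : (psub M X).det ≠ 0) :
    ppt M X * rmix M X =
      Matrix.of fun i j => if i ∈ X then (if i = j then (1:ℝ) else 0) else M i j := by
  classical
  have hdet : (m1 M X).det ≠ 0 := hX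
  have hinv : (m1 M X)⁻¹ * m1 M X = 1 :=
    Matrix.nonsing_inv_mul _ (isUnit_iff_ne_zero.mpr hdet)
  ext i j
  rw [Matrix.mul_apply]
  rw [← Finset.sum_add_sum_compl X]
  have hsum2 : ∑ k ∈ Xᶜ, ppt M X i k * rmix M X k j
      = if j ∈ X then 0 else ppt M X i j := by
    have : ∀ k ∈ Xᶜ, ppt M X i k * rmix M X k j
        = if k = j then ppt M X i k else 0 := by
      intro k hk
      have hk' : k ∉ X := Finset.mem_compl.mp hk
      simp [rmix, hk', mul_ite]
    rw [Finset.sum_congr rfl this, Finset.sum_ite_eq' Xᶜ j (fun k => ppt M X i k)]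
    by_cases hj : j ∈ X <;> simp [hj]
  rw [hsum2]
  have hsum1 : ∑ k ∈ X, ppt M X i k * rmix M X k j
      = ∑ k ∈ X.attach, ppt M X i k.1 * M k.1 j := by
    rw [← Finset.sum_attach X (fun k => ppt M X i k * rmix M X k j)]
    refine Finset.sum_congr rfl fun k _ => ?_
    simp [rmix, k.2]
  rw [hsum1]
  by_cases hi : i ∈ X
  · by_cases hj : j ∈ X
    · have h1 : ∑ k ∈ X.attach, ppt M X i k.1 * M k.1 j
          = ((m1 M X)⁻¹ * m1 M X) ⟨i, hi⟩ ⟨j, hj⟩ := by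
        rw [Matrix.mul_apply, ← Finset.univ_eq_attach]
        exact Finset.sum_congr rfl fun k _ => by rw [ppt_apply_pp hi k.2]; rfl
      rw [h1, hinv]
      simp [Matrix.one_apply, hi, hj, Subtype.ext_iff]
    · have h1 : ∑ k ∈ X.attach, ppt M X i k.1 * M k.1 j
          = ((m1 M X)⁻¹ * m2 M X) ⟨i, hi⟩ ⟨j, Finset.mem_compl.mpr hj⟩ := by
        rw [Matrix.mul_apply, ← Finset.univ_eq_attach]
        exact Finset.sum_congr rfl fun k _ => by rw [ppt_apply_pp hi k.2]; rfl
      have hij : i ≠ j := fun h => hj (h ▸ hi)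
      rw [h1, if_neg hj, ppt_apply_pn hi hj]
      simp [hi, hij]
  · by_cases hj : j ∈ X
    · have h1 : ∑ k ∈ X.attach, ppt M X i k.1 * M k.1 j
          = (m3 M X * (m1 M X)⁻¹ * m1 M X) ⟨i, Finset.mem_compl.mpr hi⟩ ⟨j, hj⟩ := by
        rw [Matrix.mul_apply, ← Finset.univ_eq_attach]
        exact Finset.sum_congr rfl fun k _ => by rw [ppt_apply_np hi k.2]; rfl
      rw [h1, Matrix.mul_assoc, hinv, Matrix.mul_one]
      simp [hi, hj, m3]
    · have h1 : ∑ k ∈ X.attach, ppt M X i k.1 * M k.1 j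
          = (m3 M X * (m1 M X)⁻¹ * m2 M X) ⟨i, Finset.mem_compl.mpr hi⟩ ⟨j, Finset.mem_compl.mpr hj⟩ := by
        rw [Matrix.mul_apply, ← Finset.univ_eq_attach]
        exact Finset.sum_congr rfl fun k _ => by rw [ppt_apply_np hi k.2]; rfl
      rw [h1, if_neg hj, ppt_apply_nn hi hj]
      simp [hi]

lemma rmix_mul (N A : Matrix (Fin n) (Fin n) ℝ) (Y : Finset (Fin n)) :
    rmix N Y * A = Matrix.of fun i j => if i ∈ Y then (N * A) i j else A i j := by
  ext i j
  rw [Matrix.mul_apply]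
  by_cases hi : i ∈ Y
  · simp only [rmix, Matrix.of_apply, hi, if_true, Matrix.mul_apply]
  · simp only [rmix, Matrix.of_apply, hi, if_false]
    rw [Finset.sum_eq_single i]
    · simp
    · intro k _ hk; simp [Ne.symm hk]
    · simp

lemma key (M : Matrix (Fin n) (Fin n) ℝ) (X Y : Finset (Fin n))
    (hX : (psub M X).det ≠ 0) :
    rmix (ppt M X) Y * rmix M X = rmix M (X ∆ Y) := by
  rw [rmix_mul, ppt_mul M X hX]
  ext i j
  by_cases hi : i ∈ Y <;> by_cases hi' : i ∈ X <;>
    simp [rmix, hi, hi', Finset.mem_symmDiff]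

end Stmt19

/-- for the principal pivot transform `M * X` (with `M[X]` invertible),
`det((M * X)[Y]) = det(M[X △ Y]) / det(M[X])` for every `Y`. -/
theorem stmt19 {n : ℕ} (M : Matrix (Fin n) (Fin n) ℝ) (X : Finset (Fin n))
    (hX : (psub M X).det ≠ 0) :
    ∀ Y : Finset (Fin n),
      (psub (ppt M X) Y).det = (psub M (X ∆ Y)).det / (psub M X).det := by
  intro Y
  have h := congrArg Matrix.det (Stmt19.key M X Y hX)
  rw [Matrix.det_mul, Stmt19.det_rmix, Stmt19.det_rmix, Stmt19.det_rmix] at h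
  rw [eq_div_iff hX]
  exact h
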